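/- Let P be a positivity-preserving linear operator on C¹(I) with ∫ Ph dm = ∫ h dm, satisfying the distortion bound ‖(Ph)'/(Ph)‖_∞ ≤ σ‖h'/h‖_∞ + K₀ with σ < 1, and let K_L, θ satisfy K_L(1 − θ e^{|I|K_L}) > σK_L + K₀. If h ∈ C¹(I) is positive with ‖h'/h‖_∞ ≤ K_L, then g := Ph − θ·∫h dm is positive and satisfies ‖g'/g‖_∞ ≤ K_L. -/

import Mathlib

open MeasureTheory
open Set

lemma harnack_aux (a b K : ℝ) (hab : a < b) (hK : 0 ≤ K) (f : ℝ → ℝ)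
    (hf : ContDiffOn ℝ 1 f (Set.Icc a b)) (hpos : ∀ x ∈ Set.Icc a b, 0 < f x)
    (hd : ∀ x ∈ Set.Icc a b, |deriv f x| ≤ K * f x) :
    ∀ x ∈ Set.Icc a b, ∀ y ∈ Set.Icc a b, f y ≤ Real.exp ((b - a) * K) * f x := by
  have hdiff := hf.differentiableOn one_ne_zero
  -- step 1 on Ioo
  have step : ∀ x ∈ Set.Ioo a b, ∀ y ∈ Set.Ioo a b,
      f y ≤ Real.exp ((b - a) * K) * f x := by
    intro x hx y hy
    have hmvt : ∀ z ∈ Set.Ioo a b, HasDerivWithinAt (fun t => Real.log (f t))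
        (deriv f z / f z) (Set.Ioo a b) z := by
      intro z hz
      have hz' : z ∈ Set.Icc a b := Ioo_subset_Icc_self hz
      have hfa : DifferentiableAt ℝ f z :=
        (hdiff z hz').differentiableAt (Icc_mem_nhds hz.1 hz.2)
      exact ((hfa.hasDerivAt.log (hpos z hz').ne').hasDerivWithinAt)
    have bound : ∀ z ∈ Set.Ioo a b, ‖deriv f z / f z‖ ≤ K := by
      intro z hz
      have hz' : z ∈ Set.Icc a b := Ioo_subset_Icc_self hz
      rw [Real.norm_eq_abs, abs_div, abs_of_pos (hpos z hz')]
      rw [div_le_iff₀ (hpos z hz')]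
      exact hd z hz'
    have := (convex_Ioo a b).norm_image_sub_le_of_norm_hasDerivWithin_le hmvt bound hx hy
    have hyx : ‖y - x‖ ≤ b - a := by
      rw [Real.norm_eq_abs, abs_sub_le_iff]
      constructor <;> [linarith [hy.2, hx.1]; linarith [hx.2, hy.1]]
    have hlog : Real.log (f y) - Real.log (f x) ≤ (b - a) * K := by
      have h1 : Real.log (f y) - Real.log (f x) ≤ K * ‖y - x‖ := by
        calc Real.log (f y) - Real.log (f x) ≤ ‖Real.log (f y) - Real.log (f x)‖ :=
              le_abs_self _
          _ ≤ K * ‖y - x‖ := this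
      nlinarith [norm_nonneg (y - x)]
    have hfx := hpos x (Ioo_subset_Icc_self hx)
    have hfy := hpos y (Ioo_subset_Icc_self hy)
    calc f y = Real.exp (Real.log (f y)) := (Real.exp_log hfy).symm
      _ ≤ Real.exp ((b - a) * K + Real.log (f x)) := by
          apply Real.exp_le_exp.2; linarith
      _ = Real.exp ((b - a) * K) * f x := by
          rw [Real.exp_add, Real.exp_log hfx]
  -- step 2: extend by continuity
  have hcont : ContinuousOn f (Set.Icc a b) := hf.continuousOn
  intro x hx y hy
  have hcl : Set.Icc a b ×ˢ Set.Icc a b = closure (Set.Ioo a b ×ˢ Set.Ioo a b) := by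
    rw [closure_prod_eq, closure_Ioo hab.ne]
  have key := le_on_closure (f := fun p : ℝ × ℝ => f p.2)
    (g := fun p : ℝ × ℝ => Real.exp ((b - a) * K) * f p.1)
    (s := Set.Ioo a b ×ˢ Set.Ioo a b)
    (fun p hp => step p.1 hp.1 p.2 hp.2)
    (by rw [← hcl]; exact hcont.comp continuous_snd.continuousOn (fun p hp => hp.2))
    (by rw [← hcl]
        exact continuousOn_const.mul (hcont.comp continuous_fst.continuousOn (fun p hp => hp.1)))
  have := key (x := (x, y)) (by rw [← hcl]; exact ⟨hx, hy⟩)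
  exact this

lemma avg_le_of_le (a b : ℝ) (hab : a < b) (f : ℝ → ℝ)
    (hf : ContinuousOn f (Set.Icc a b)) (c : ℝ)
    (hfc : ∀ x ∈ Set.Icc a b, f x ≤ c) : ⨍ x in Set.Icc a b, f x ≤ c := by
  rw [setAverage_eq]
  have hvol : (volume (Set.Icc a b)).toReal = b - a := by
    rw [Real.volume_Icc, ENNReal.toReal_ofReal (by linarith)]
  have hint : ∫ x in Set.Icc a b, f x ≤ ∫ _x in Set.Icc a b, c := by
    apply setIntegral_mono_on (hf.integrableOn_Icc) (integrableOn_const (by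
      rw [Real.volume_Icc]; exact ENNReal.ofReal_ne_top)) measurableSet_Icc hfc
  rw [setIntegral_const, smul_eq_mul, measureReal_def, hvol] at hint
  rw [smul_eq_mul, measureReal_def, hvol, inv_mul_le_iff₀ (by linarith)]
  linarith

lemma le_avg_of_le (a b : ℝ) (hab : a < b) (f : ℝ → ℝ)
    (hf : ContinuousOn f (Set.Icc a b)) (c : ℝ)
    (hfc : ∀ x ∈ Set.Icc a b, c ≤ f x) : c ≤ ⨍ x in Set.Icc a b, f x := by
  have := avg_le_of_le a b hab (fun x => -f x) hf.neg (-c) (fun x hx => by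
    simpa using hfc x hx)
  have havg : ⨍ x in Set.Icc a b, (-f x) = - ⨍ x in Set.Icc a b, f x := by
    simp [average_neg]
  rw [havg] at this; linarith


/-- Coupling step: if `P` is a positivity-preserving linear operator preserving the
mean and satisfying the distortion bound, and `K_L (1 - θ e^{|I|K_L}) > σ K_L + K₀`,
then for regular `h` the function `g = Ph - θ ∫ h dm` is positive and regular. -/
theorem stmt17 (a b σ K₀ K_L θ : ℝ) (hab : a < b)
    (hσ0 : 0 < σ) (hσ1 : σ < 1) (hK₀ : 0 < K₀) (hKL : 0 < K_L)
    (hθ : θ ∈ Set.Ioo (0:ℝ) 1)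
    (hcond : K_L * (1 - θ * Real.exp ((b - a) * K_L)) > σ * K_L + K₀)
    (P : (ℝ → ℝ) → (ℝ → ℝ))
    (hlin : ∀ (f g : ℝ → ℝ) (c : ℝ),
      P (fun x => c * f x + g x) = fun x => c * P f x + P g x)
    (hposP : ∀ f : ℝ → ℝ, (∀ x ∈ Set.Icc a b, 0 < f x) →
      ∀ x ∈ Set.Icc a b, 0 < P f x)
    (hsmooth : ∀ f : ℝ → ℝ, ContDiffOn ℝ 1 f (Set.Icc a b) →
      ContDiffOn ℝ 1 (P f) (Set.Icc a b))
    (hmean : ∀ f : ℝ → ℝ, ContDiffOn ℝ 1 f (Set.Icc a b) →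
      ⨍ x in Set.Icc a b, P f x = ⨍ x in Set.Icc a b, f x)
    (hdist : ∀ (f : ℝ → ℝ) (L : ℝ), ContDiffOn ℝ 1 f (Set.Icc a b) →
      (∀ x ∈ Set.Icc a b, 0 < f x) →
      (∀ x ∈ Set.Icc a b, |deriv f x| ≤ L * f x) →
      ∀ x ∈ Set.Icc a b, |deriv (P f) x| ≤ (σ * L + K₀) * P f x)
    (h : ℝ → ℝ) (hC1 : ContDiffOn ℝ 1 h (Set.Icc a b))
    (hpos : ∀ x ∈ Set.Icc a b, 0 < h x)
    (hlog : ∀ x ∈ Set.Icc a b, |deriv h x| ≤ K_L * h x) :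
    (∀ x ∈ Set.Icc a b, 0 < P h x - θ * ⨍ y in Set.Icc a b, h y) ∧
      ∀ x ∈ Set.Icc a b,
        |deriv (fun x => P h x - θ * ⨍ y in Set.Icc a b, h y) x| ≤
          K_L * (P h x - θ * ⨍ y in Set.Icc a b, h y) := by

  obtain ⟨hθ0, hθ1⟩ := hθ
  set e := Real.exp ((b - a) * K_L) with he
  have hepos : 0 < e := Real.exp_pos _
  have hθe : θ * e < 1 := by nlinarith
  set A := ⨍ y in Set.Icc a b, h y with hA
  have PhC1 := hsmooth h hC1
  have Phpos := hposP h hpos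
  have Phd := hdist h K_L hC1 hpos hlog
  have hKL' : σ * K_L + K₀ ≤ K_L := by nlinarith [mul_pos hθ0 hepos, mul_pos (mul_pos hθ0 hepos) hKL]
  have Phd' : ∀ x ∈ Set.Icc a b, |deriv (P h) x| ≤ K_L * P h x := fun x hx =>
    (Phd x hx).trans (by nlinarith [Phpos x hx])
  have har := harnack_aux a b K_L hab hKL.le (P h) PhC1 Phpos Phd'
  have hAeq : ⨍ x in Set.Icc a b, P h x = A := hmean h hC1
  have hAle : ∀ x ∈ Set.Icc a b, A ≤ e * P h x := by
    intro x hx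
    rw [← hAeq]
    exact avg_le_of_le a b hab (P h) PhC1.continuousOn (e * P h x)
      (fun y hy => har x hx y hy)
  have hA0 : 0 < A := by
    obtain ⟨x₀, hx₀, hmin⟩ := isCompact_Icc.exists_isMinOn
      (Set.nonempty_Icc.2 hab.le) hC1.continuousOn
    have : h x₀ ≤ A := le_avg_of_le a b hab h hC1.continuousOn (h x₀)
      (fun y hy => hmin hy)
    linarith [hpos x₀ hx₀]
  have hposg : ∀ x ∈ Set.Icc a b, 0 < P h x - θ * A := by
    intro x hx
    have h1 := hAle x hx
    have h2 := Phpos x hx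
    nlinarith
  refine ⟨hposg, fun x hx => ?_⟩
  have hder : deriv (fun x => P h x - θ * A) x = deriv (P h) x := by
    simp [deriv_sub_const]
  rw [hder]
  have h1 := Phd x hx
  have h2 := hAle x hx
  have h3 := Phpos x hx
  have : (σ * K_L + K₀) * P h x ≤ K_L * (P h x - θ * A) := by nlinarith
  linarith
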